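/- Let A₁, A₂ be rings, W an (A₁,A₂)-bimodule finitely generated and projective as a left A₁-module, A = A₁[W]A₂, and M = (P₁, φ, P₂) an A-module with P₁, P₂ projective over A₁, A₂ respectively. Then the sequence 0 → (W⊗_{A₂}P₂, 0, 0) → (P₁, 0, 0) ⊕ (W⊗_{A₂}P₂, id, P₂) → (P₁, φ, P₂) → 0, with the first map given by (−φ; id, 0) and the second by ((id φ), id), is a projective resolution of M over A. -/

import Mathlib

noncomputable section

variable (A₁ A₂ W : Type) [Ring A₁] [Ring A₂]
  [AddCommGroup W] [Module A₁ W] [Module A₂ᵐᵒᵖ W] [SMulCommClass A₁ A₂ᵐᵒᵖ W]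

/-- `W` as a left module over `A₁ × A₂` (via the first factor). -/
instance modLeft : Module (A₁ × A₂) W := Module.compHom W (RingHom.fst A₁ A₂)

/-- `W` as a right module over `A₁ × A₂` (via the second factor). -/
instance modRight : Module (A₁ × A₂)ᵐᵒᵖ W :=
  Module.compHom W (RingHom.op (RingHom.snd A₁ A₂))

instance commCls : SMulCommClass (A₁ × A₂) (A₁ × A₂)ᵐᵒᵖ W :=
  ⟨fun r s w => smul_comm r.1 (MulOpposite.op s.unop.2) w⟩

/-- The triangular matrix ring `A₁[W]A₂` of matrices `(a₁ w; 0 a₂)`, realized as the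
trivial square-zero extension of `A₁ × A₂` by the `(A₁,A₂)`-bimodule `W`. -/
abbrev TriRing := TrivSqZeroExt (A₁ × A₂) W

/-- The diagonal idempotent `e₁ = (1 0; 0 0)`. -/
def e1 : TriRing A₁ A₂ W := TrivSqZeroExt.inl ((1 : A₁), (0 : A₂))

/-- The diagonal idempotent `e₂ = (0 0; 0 1)`. -/
def e2 : TriRing A₁ A₂ W := TrivSqZeroExt.inl ((0 : A₁), (1 : A₂))

variable (P₂ : Type) [AddCommGroup P₂] [Module A₂ P₂]

/-- The defining relations of the tensor product `W ⊗_{A₂} P₂`. -/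
def wrel : Submodule ℤ (TensorProduct ℤ W P₂) :=
  Submodule.span ℤ {x | ∃ (a : A₂) (w : W) (p : P₂),
    x = (MulOpposite.op a • w) ⊗ₜ[ℤ] p - w ⊗ₜ[ℤ] (a • p)}

/-- The tensor product `W ⊗_{A₂} P₂` over the (possibly noncommutative) ring `A₂`. -/
abbrev WTensor := TensorProduct ℤ W P₂ ⧸ wrel A₂ W P₂

/-- The elementary tensor `w ⊗ p` in `W ⊗_{A₂} P₂`. -/
def wmk (w : W) (p : P₂) : WTensor A₂ W P₂ :=
  Submodule.Quotient.mk (w ⊗ₜ[ℤ] p)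

/-- Left multiplication by `a : A₁` on `W`, as a `ℤ`-linear map. -/
def smulW (a : A₁) : W →ₗ[ℤ] W where
  toFun := (a • ·)
  map_add' := smul_add a
  map_smul' z w := smul_comm a z w

/-- The left action of `a : A₁` on `W ⊗_{A₂} P₂` (through the left action on `W`). -/
def tau (a : A₁) : WTensor A₂ W P₂ →ₗ[ℤ] WTensor A₂ W P₂ :=
  Submodule.mapQ _ _ (LinearMap.rTensor P₂ (smulW A₁ W a)) (by
    rw [wrel, Submodule.span_le]
    rintro x ⟨b, w, p, rfl⟩
    have : (LinearMap.rTensor P₂ (smulW A₁ W a))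
        ((MulOpposite.op b • w) ⊗ₜ[ℤ] p - w ⊗ₜ[ℤ] (b • p))
        = (MulOpposite.op b • (a • w)) ⊗ₜ[ℤ] p - (a • w) ⊗ₜ[ℤ] (b • p) := by
      simp [smulW, smul_comm]
    rw [SetLike.mem_coe]
    show (LinearMap.rTensor P₂ (smulW A₁ W a))
        ((MulOpposite.op b • w) ⊗ₜ[ℤ] p - w ⊗ₜ[ℤ] (b • p)) ∈ Submodule.span ℤ
          {x | ∃ (a : A₂) (w : W) (p : P₂), x = (MulOpposite.op a • w) ⊗ₜ[ℤ] p - w ⊗ₜ[ℤ] (a • p)}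
    rw [this]
    exact Submodule.subset_span ⟨b, a • w, p, rfl⟩)

section Aux

open TrivSqZeroExt MulOpposite Finsupp

set_option linter.unusedSectionVars false

/-! ### Basic lemmas about `wmk` and `tau` -/

lemma wmk_add_left (w w' : W) (p : P₂) :
    wmk A₂ W P₂ (w + w') p = wmk A₂ W P₂ w p + wmk A₂ W P₂ w' p := by
  simp [wmk, TensorProduct.add_tmul, Submodule.Quotient.mk_add]

lemma wmk_add_right (w : W) (p p' : P₂) :
    wmk A₂ W P₂ w (p + p') = wmk A₂ W P₂ w p + wmk A₂ W P₂ w p' := by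
  simp [wmk, TensorProduct.tmul_add, Submodule.Quotient.mk_add]

lemma wmk_zero_left (p : P₂) : wmk A₂ W P₂ 0 p = 0 := by
  simp [wmk, TensorProduct.zero_tmul]

lemma wmk_zero_right (w : W) : wmk A₂ W P₂ w 0 = 0 := by
  simp [wmk, TensorProduct.tmul_zero]

lemma wmk_rel (a : A₂) (w : W) (p : P₂) :
    wmk A₂ W P₂ (op a • w) p = wmk A₂ W P₂ w (a • p) := by
  rw [wmk, wmk, Submodule.Quotient.eq]
  exact Submodule.subset_span ⟨a, w, p, rfl⟩

/-- `wmk w` as an additive monoid hom in the second variable. -/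
def wmkHom (w : W) : P₂ →+ WTensor A₂ W P₂ where
  toFun p := wmk A₂ W P₂ w p
  map_zero' := wmk_zero_right A₂ W P₂ w
  map_add' p p' := wmk_add_right A₂ W P₂ w p p'

lemma tau_mk (a : A₁) (t : TensorProduct ℤ W P₂) :
    tau A₁ A₂ W P₂ a (Submodule.Quotient.mk t)
      = Submodule.Quotient.mk (LinearMap.rTensor P₂ (smulW A₁ W a) t) := by
  rw [tau]; exact Submodule.mapQ_apply _ _ _ _

lemma tau_wmk (a : A₁) (w : W) (p : P₂) :
    tau A₁ A₂ W P₂ a (wmk A₂ W P₂ w p) = wmk A₂ W P₂ (a • w) p := by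
  rw [wmk, tau_mk]
  simp [smulW, wmk]

lemma wtensor_induction {C : WTensor A₂ W P₂ → Prop} (x : WTensor A₂ W P₂)
    (h0 : C 0) (hmk : ∀ w p, C (wmk A₂ W P₂ w p)) (hadd : ∀ x y, C x → C y → C (x + y)) :
    C x := by
  obtain ⟨t, rfl⟩ := Submodule.Quotient.mk_surjective _ x
  induction t using TensorProduct.induction_on with
  | zero => simpa using h0
  | tmul w p => exact hmk w p
  | add s t hs ht => rw [Submodule.Quotient.mk_add]; exact hadd _ _ hs ht

lemma tau_zero (x : WTensor A₂ W P₂) : tau A₁ A₂ W P₂ 0 x = 0 := by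
  induction x using wtensor_induction with
  | h0 => simp
  | hmk w p => rw [tau_wmk, zero_smul, wmk_zero_left]
  | hadd x y hx hy => rw [map_add, hx, hy, add_zero]

lemma tau_one (x : WTensor A₂ W P₂) : tau A₁ A₂ W P₂ 1 x = x := by
  induction x using wtensor_induction with
  | h0 => simp
  | hmk w p => rw [tau_wmk, one_smul]
  | hadd x y hx hy => rw [map_add, hx, hy]

lemma tau_mul (a b : A₁) (x : WTensor A₂ W P₂) :
    tau A₁ A₂ W P₂ (a * b) x = tau A₁ A₂ W P₂ a (tau A₁ A₂ W P₂ b x) := by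
  induction x using wtensor_induction with
  | h0 => simp
  | hmk w p => rw [tau_wmk, tau_wmk, tau_wmk, mul_smul]
  | hadd x y hx hy => rw [map_add, map_add, map_add, hx, hy]

lemma tau_add (a b : A₁) (x : WTensor A₂ W P₂) :
    tau A₁ A₂ W P₂ (a + b) x = tau A₁ A₂ W P₂ a x + tau A₁ A₂ W P₂ b x := by
  induction x using wtensor_induction with
  | h0 => simp
  | hmk w p => rw [tau_wmk, tau_wmk, tau_wmk, add_smul, wmk_add_left]
  | hadd x y hx hy =>
      rw [map_add, map_add, map_add, hx, hy]
      abel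

/-- The `A₁`-module structure on `W ⊗_{A₂} P₂` given by `tau`. -/
def kModule : Module A₁ (WTensor A₂ W P₂) where
  smul a x := tau A₁ A₂ W P₂ a x
  one_smul := tau_one A₁ A₂ W P₂
  mul_smul := tau_mul A₁ A₂ W P₂
  smul_zero a := map_zero (tau A₁ A₂ W P₂ a)
  smul_add a := map_add (tau A₁ A₂ W P₂ a)
  add_smul := tau_add A₁ A₂ W P₂
  zero_smul := tau_zero A₁ A₂ W P₂

/-! ### Multiplication lemmas in the triangular ring -/

lemma op_smul_pair (b : A₁ × A₂) (w : W) : (op b) • w = (op b.2) • w := rfl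

lemma pair_smul (b : A₁ × A₂) (w : W) : b • w = b.1 • w := rfl

lemma tri_mul_inl1 (a : TriRing A₁ A₂ W) (b : A₁) :
    a * inl (b, 0) = inl (a.fst.1 * b, 0) := by
  refine TrivSqZeroExt.ext ?_ ?_
  · simp [Prod.mul_def]
  · simp [op_smul_pair]

lemma tri_mul_inl2 (a : TriRing A₁ A₂ W) (b : A₂) :
    a * inl (0, b) = inl (0, a.fst.2 * b) + inr (op b • a.snd) := by
  refine TrivSqZeroExt.ext ?_ ?_
  · simp [Prod.mul_def]
  · simp [op_smul_pair]

lemma tri_mul_inr (a : TriRing A₁ A₂ W) (w : W) :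
    a * inr w = inr (a.fst.1 • w) := by
  refine TrivSqZeroExt.ext ?_ ?_
  · simp
  · simp [op_smul_pair, pair_smul]

lemma sum_single_comp_apply {ι M N : Type} [Zero M] [AddCommMonoid N] (f : ι →₀ M)
    (g : ι → M → N) (hg : ∀ q, g q 0 = 0) (q : ι) :
    (f.sum fun q' a => Finsupp.single q' (g q' a)) q = g q (f q) := by
  classical
  rw [Finsupp.sum_apply, Finsupp.sum]
  rw [Finset.sum_eq_single q (fun b _ hb => Finsupp.single_eq_of_ne' hb)
    (fun hq => by simp [Finsupp.notMem_support_iff.mp hq, hg])]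
  rw [Finsupp.single_eq_same]

lemma inl1_add (b c : A₁) :
    (inl (b + c, 0) : TriRing A₁ A₂ W) = inl (b, 0) + inl (c, 0) := by
  rw [← inl_add, Prod.mk_add_mk, add_zero]

lemma inl2_add (b c : A₂) :
    (inl (0, b + c) : TriRing A₁ A₂ W) = inl (0, b) + inl (0, c) := by
  rw [← inl_add, Prod.mk_add_mk, add_zero]

lemma tri_smul_decomp {N : Type} [AddCommGroup N] [Module (TriRing A₁ A₂ W) N]
    (a : TriRing A₁ A₂ W) (x : N) :
    a • x = (inl (a.fst.1, a.fst.2) : TriRing A₁ A₂ W) • x + (inr a.snd : TriRing A₁ A₂ W) • x := by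
  conv_lhs => rw [← inl_fst_add_inr_snd_eq a]
  rw [add_smul]

/-- A module of the form `(N, 0, 0)` with `N` projective over `A₁` is projective over
the triangular ring. -/
lemma proj_of_proj_left (N : Type) [AddCommGroup N] [Module A₁ N]
    [Module (TriRing A₁ A₂ W) N]
    (h1 : ∀ (a₁ : A₁) (a₂ : A₂) (x : N), (inl (a₁, a₂) : TriRing A₁ A₂ W) • x = a₁ • x)
    (h2 : ∀ (w : W) (x : N), (inr w : TriRing A₁ A₂ W) • x = 0)
    (hN : Module.Projective A₁ N) : Module.Projective (TriRing A₁ A₂ W) N := by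
  classical
  obtain ⟨σ, hσ⟩ := Module.projective_def'.mp hN
  have hsm : ∀ (a : TriRing A₁ A₂ W) (x : N), a • x = a.fst.1 • x := fun a x => by
    rw [tri_smul_decomp, h1, h2, add_zero]
  refine Module.Projective.of_split (M := N →₀ TriRing A₁ A₂ W)
    ⟨⟨fun x => (σ x).mapRange (fun b => (inl (b, 0) : TriRing A₁ A₂ W)) (TrivSqZeroExt.inl_zero _), ?_⟩, ?_⟩
    (Finsupp.linearCombination _ id) ?_
  · intro x y
    ext k : 1
    simp [Finsupp.mapRange_apply, map_add, inl1_add]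
  · intro a x
    ext k : 1
    simp only [Finsupp.mapRange_apply, RingHom.id_apply, Finsupp.smul_apply, smul_eq_mul,
      hsm a x, map_smul, tri_mul_inl1]
  · ext x
    simp only [LinearMap.comp_apply, LinearMap.coe_mk, AddHom.coe_mk, LinearMap.id_apply,
      Finsupp.linearCombination_apply, id_eq]
    rw [Finsupp.sum_mapRange_index (fun k => by rw [zero_smul])]
    have := LinearMap.congr_fun hσ x
    simp only [LinearMap.comp_apply, LinearMap.id_apply, Finsupp.linearCombination_apply,
      id_eq] at this
    rw [show ((σ x).sum fun a b => (inl (b, 0) : TriRing A₁ A₂ W) • a)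
        = (σ x).sum fun a b => b • a from Finsupp.sum_congr fun k _ => h1 _ 0 k]
    exact this

section Alpha

variable (σ₂ : P₂ →ₗ[A₂] (P₂ →₀ A₂))

/-- `p ↦ Σ_q single q (op (σ₂ p q) • w)`, additive in `p`. -/
def alphaAux (w : W) : P₂ →+ (P₂ →₀ W) where
  toFun p := (σ₂ p).sum fun q a => Finsupp.single q (op a • w)
  map_zero' := by simp
  map_add' p p' := by
    show ((σ₂ (p + p')).sum fun q a => Finsupp.single q (op a • w)) = _
    rw [map_add]
    exact Finsupp.sum_add_index' (fun q => by simp)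
      (fun q a a' => by rw [op_add, add_smul, Finsupp.single_add])

/-- The bilinear version of `alphaAux`. -/
def alphaBil : W →ₗ[ℤ] P₂ →ₗ[ℤ] (P₂ →₀ W) where
  toFun w := (alphaAux A₂ W P₂ σ₂ w).toIntLinearMap
  map_add' w w' := by
    ext p : 1
    show ((σ₂ p).sum fun q a => Finsupp.single q (op a • (w + w')))
        = ((σ₂ p).sum fun q a => Finsupp.single q (op a • w))
          + (σ₂ p).sum fun q a => Finsupp.single q (op a • w')
    rw [Finsupp.sum, Finsupp.sum, Finsupp.sum, ← Finset.sum_add_distrib]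
    exact Finset.sum_congr rfl fun q _ => by rw [smul_add, Finsupp.single_add]
  map_smul' z w := by
    ext p : 1
    show ((σ₂ p).sum fun q a => Finsupp.single q (op a • (z • w)))
        = z • ((σ₂ p).sum fun q a => Finsupp.single q (op a • w))
    rw [Finsupp.smul_sum]
    exact Finsupp.sum_congr fun q _ => by rw [smul_comm, Finsupp.smul_single]

lemma alphaT_rel :
    wrel A₂ W P₂ ≤ LinearMap.ker (TensorProduct.lift (alphaBil A₂ W P₂ σ₂)) := by
  rw [wrel]
  refine Submodule.span_le.mpr ?_
  rintro x ⟨a, w, p, rfl⟩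
  show TensorProduct.lift (alphaBil A₂ W P₂ σ₂) ((op a • w) ⊗ₜ[ℤ] p - w ⊗ₜ[ℤ] (a • p)) = 0
  simp only [SetLike.mem_coe, LinearMap.mem_ker, map_sub, TensorProduct.lift.tmul]
  simp only [alphaBil, alphaAux, LinearMap.coe_mk, AddHom.coe_mk,
    AddMonoidHom.coe_toIntLinearMap, AddMonoidHom.coe_mk, ZeroHom.coe_mk]
  rw [map_smul, Finsupp.sum_smul_index' (fun q => by simp), sub_eq_zero]
  exact Finsupp.sum_congr fun q _ => by
    rw [smul_smul, ← op_mul, smul_eq_mul]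

/-- The map `α : W ⊗_{A₂} P₂ → (P₂ →₀ W)` splitting `β`. -/
def alphaL : WTensor A₂ W P₂ →ₗ[ℤ] (P₂ →₀ W) :=
  Submodule.liftQ _ (TensorProduct.lift (alphaBil A₂ W P₂ σ₂)) (alphaT_rel A₂ W P₂ σ₂)

lemma alphaL_wmk (w : W) (p : P₂) :
    alphaL A₂ W P₂ σ₂ (wmk A₂ W P₂ w p)
      = (σ₂ p).sum fun q a => Finsupp.single q (op a • w) := by
  rw [wmk, alphaL]
  rfl

lemma alphaL_apply_wmk (w : W) (p q : P₂) :
    alphaL A₂ W P₂ σ₂ (wmk A₂ W P₂ w p) q = op (σ₂ p q) • w := by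
  rw [alphaL_wmk]
  exact sum_single_comp_apply _ _ (fun q => by simp) q

lemma alphaL_tau (a : A₁) (x : WTensor A₂ W P₂) :
    alphaL A₂ W P₂ σ₂ (tau A₁ A₂ W P₂ a x) = a • alphaL A₂ W P₂ σ₂ x := by
  induction x using wtensor_induction with
  | h0 => simp
  | hmk w p =>
      rw [tau_wmk, alphaL_wmk, alphaL_wmk, Finsupp.smul_sum]
      exact Finsupp.sum_congr fun q _ => by
        rw [← smul_comm a (op (σ₂ p q)) w, Finsupp.smul_single]
  | hadd x y hx hy => rw [map_add, map_add, hx, hy, map_add, smul_add]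

/-- `wmk · q` as an additive map. -/
def wmkAddHom (q : P₂) : W →+ WTensor A₂ W P₂ where
  toFun w := wmk A₂ W P₂ w q
  map_zero' := wmk_zero_left A₂ W P₂ q
  map_add' w w' := wmk_add_left A₂ W P₂ w w' q

/-- The map `β : (P₂ →₀ W) → W ⊗_{A₂} P₂`, `single q w ↦ wmk w q`. -/
def betaHom : (P₂ →₀ W) →+ WTensor A₂ W P₂ := Finsupp.liftAddHom (wmkAddHom A₂ W P₂)

lemma betaHom_single (q : P₂) (w : W) :
    betaHom A₂ W P₂ (Finsupp.single q w) = wmk A₂ W P₂ w q :=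
  Finsupp.liftAddHom_apply_single _ _ _

lemma betaHom_apply (f : P₂ →₀ W) :
    betaHom A₂ W P₂ f = f.sum fun q w => wmk A₂ W P₂ w q :=
  Finsupp.liftAddHom_apply _ _

lemma beta_alpha (hσ₂ : ∀ p : P₂, ((σ₂ p).sum fun q a => a • q) = p) (x : WTensor A₂ W P₂) :
    betaHom A₂ W P₂ (alphaL A₂ W P₂ σ₂ x) = x := by
  induction x using wtensor_induction with
  | h0 => simp
  | hmk w p =>
      rw [alphaL_wmk, map_finsuppSum]
      trans (σ₂ p).sum fun q a => wmkHom A₂ W P₂ w (a • q)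
      · exact Finsupp.sum_congr fun q _ => by
          rw [betaHom_single, wmk_rel]; rfl
      · rw [← map_finsuppSum, hσ₂ p]; rfl
  | hadd x y hx hy => rw [map_add, map_add, hx, hy]

lemma betaHom_smul (a : A₁) (f : P₂ →₀ W) :
    betaHom A₂ W P₂ (a • f) = tau A₁ A₂ W P₂ a (betaHom A₂ W P₂ f) := by
  induction f using Finsupp.induction with
  | zero => simp
  | single_add q w f _ _ ih =>
      rw [smul_add, map_add, map_add, Finsupp.smul_single, betaHom_single, betaHom_single,
        map_add, tau_wmk, ih]

lemma finsuppW_projective (hWproj : Module.Projective A₁ W) :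
    Module.Projective A₁ (P₂ →₀ W) := by
  classical
  haveI : ∀ _ : P₂, Module.Projective A₁ W := fun _ => hWproj
  exact Module.Projective.of_equiv (finsuppLequivDFinsupp (M := W) (ι := P₂) A₁).symm

set_option maxHeartbeats 1000000 in
lemma kProjective (hP₂ : Module.Projective A₂ P₂) (hWproj : Module.Projective A₁ W) :
    letI := kModule A₁ A₂ W P₂
    Module.Projective A₁ (WTensor A₂ W P₂) := by
  letI := kModule A₁ A₂ W P₂
  obtain ⟨σ₂, hσ₂'⟩ := Module.projective_def'.mp hP₂
  have hσ₂ : ∀ p : P₂, ((σ₂ p).sum fun q a => a • q) = p := fun p => by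
    have := LinearMap.congr_fun hσ₂' p
    simpa [Finsupp.linearCombination_apply] using this
  haveI := finsuppW_projective (A₁ := A₁) (W := W) (P₂ := P₂) hWproj
  let α : WTensor A₂ W P₂ →ₗ[A₁] (P₂ →₀ W) :=
    { toFun := alphaL A₂ W P₂ σ₂
      map_add' := map_add _
      map_smul' := fun a x => alphaL_tau A₁ A₂ W P₂ σ₂ a x }
  let β : (P₂ →₀ W) →ₗ[A₁] WTensor A₂ W P₂ :=
    { toFun := betaHom A₂ W P₂
      map_add' := map_add _
      map_smul' := fun a f => betaHom_smul A₁ A₂ W P₂ a f }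
  have H : β.comp α = LinearMap.id := by
    refine LinearMap.ext fun x => ?_
    show betaHom A₂ W P₂ (alphaL A₂ W P₂ σ₂ x) = x
    exact beta_alpha A₂ W P₂ σ₂ hσ₂ x
  exact Module.Projective.of_split α β H

end Alpha

lemma sum_pair {ι M N P : Type} [Zero M] [AddCommMonoid N] [AddCommMonoid P]
    (f : ι →₀ M) (g : ι → M → N) (h : ι → M → P) :
    (f.sum fun q v => ((g q v, h q v) : N × P)) = (f.sum g, f.sum h) := by
  classical
  exact Prod.ext (by simp [Finsupp.sum, Prod.fst_sum]) (by simp [Finsupp.sum, Prod.snd_sum])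

end Aux

set_option maxHeartbeats 2000000 in
/-- the standard resolution.  Let `W` be an `(A₁,A₂)`-bimodule, finitely
generated and projective as a left `A₁`-module, `A = A₁[W]A₂`, and `M = (P₁, φ, P₂)` an
`A`-module with `P₁`, `P₂` projective (realized on `P₁ × P₂`).  Realizing the `A`-modules
`(W⊗P₂, 0, 0)` on `K := W ⊗_{A₂} P₂` and `(P₁,0,0) ⊕ (W⊗P₂, id, P₂)` on
`P₁ × ((W ⊗_{A₂} P₂) × P₂)`, the maps `x ↦ (−φ x, (x, 0))` and
`(p₁, (x, p₂)) ↦ (p₁ + φ x, p₂)` form a projective resolution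
`0 → (W⊗P₂,0,0) → (P₁,0,0) ⊕ (W⊗P₂,id,P₂) → M → 0` of `M` over `A`: both maps are
additive and `A`-linear, the first is injective, the second surjective, the image of the
first is the kernel of the second, and the two left terms are projective `A`-modules. -/
theorem stmt3
    (hWfg : Module.Finite A₁ W) (hWproj : Module.Projective A₁ W)
    (P₁ : Type) [AddCommGroup P₁] [Module A₁ P₁]
    (hP₁ : Module.Projective A₁ P₁) (hP₂ : Module.Projective A₂ P₂)
    (φ : WTensor A₂ W P₂ →ₗ[ℤ] P₁)
    (hφ : ∀ (a : A₁) (x : WTensor A₂ W P₂), φ (tau A₁ A₂ W P₂ a x) = a • φ x)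
    -- the `A`-module `M = (P₁, φ, P₂)`
    [Module (TriRing A₁ A₂ W) (P₁ × P₂)]
    (hinl : ∀ (a₁ : A₁) (a₂ : A₂) (p₁ : P₁) (p₂ : P₂),
      (TrivSqZeroExt.inl (a₁, a₂) : TriRing A₁ A₂ W) • ((p₁, p₂) : P₁ × P₂)
        = (a₁ • p₁, a₂ • p₂))
    (hinr : ∀ (w : W) (p₁ : P₁) (p₂ : P₂),
      (TrivSqZeroExt.inr w : TriRing A₁ A₂ W) • ((p₁, p₂) : P₁ × P₂)
        = (φ (wmk A₂ W P₂ w p₂), 0))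
    -- the `A`-module `(W ⊗_{A₂} P₂, 0, 0)`
    [Module (TriRing A₁ A₂ W) (WTensor A₂ W P₂)]
    (kinl : ∀ (a₁ : A₁) (a₂ : A₂) (x : WTensor A₂ W P₂),
      (TrivSqZeroExt.inl (a₁, a₂) : TriRing A₁ A₂ W) • x = tau A₁ A₂ W P₂ a₁ x)
    (kinr : ∀ (w : W) (x : WTensor A₂ W P₂),
      (TrivSqZeroExt.inr w : TriRing A₁ A₂ W) • x = 0)
    -- the `A`-module `(P₁, 0, 0)`
    [Module (TriRing A₁ A₂ W) P₁]
    (pinl : ∀ (a₁ : A₁) (a₂ : A₂) (p : P₁),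
      (TrivSqZeroExt.inl (a₁, a₂) : TriRing A₁ A₂ W) • p = a₁ • p)
    (pinr : ∀ (w : W) (p : P₁), (TrivSqZeroExt.inr w : TriRing A₁ A₂ W) • p = 0)
    -- the `A`-module `(W ⊗_{A₂} P₂, id, P₂)`
    [Module (TriRing A₁ A₂ W) ((WTensor A₂ W P₂) × P₂)]
    (minl : ∀ (a₁ : A₁) (a₂ : A₂) (x : WTensor A₂ W P₂) (p₂ : P₂),
      (TrivSqZeroExt.inl (a₁, a₂) : TriRing A₁ A₂ W) • ((x, p₂) : (WTensor A₂ W P₂) × P₂)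
        = (tau A₁ A₂ W P₂ a₁ x, a₂ • p₂))
    (minr : ∀ (w : W) (x : WTensor A₂ W P₂) (p₂ : P₂),
      (TrivSqZeroExt.inr w : TriRing A₁ A₂ W) • ((x, p₂) : (WTensor A₂ W P₂) × P₂)
        = (wmk A₂ W P₂ w p₂, 0)) :
    -- the resolution
    (Module.Projective (TriRing A₁ A₂ W) (WTensor A₂ W P₂)) ∧
    (Module.Projective (TriRing A₁ A₂ W) (P₁ × ((WTensor A₂ W P₂) × P₂))) ∧
    (let f : WTensor A₂ W P₂ → P₁ × ((WTensor A₂ W P₂) × P₂) := fun x => (-(φ x), (x, 0))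
     let g : P₁ × ((WTensor A₂ W P₂) × P₂) → P₁ × P₂ := fun m => (m.1 + φ m.2.1, m.2.2)
     (∀ x y, f (x + y) = f x + f y) ∧
     (∀ (a : TriRing A₁ A₂ W) (x : WTensor A₂ W P₂), f (a • x) = a • f x) ∧
     (∀ x y, g (x + y) = g x + g y) ∧
     (∀ (a : TriRing A₁ A₂ W) (m : P₁ × ((WTensor A₂ W P₂) × P₂)), g (a • m) = a • g m) ∧
     Function.Injective f ∧ Function.Surjective g ∧
     Set.range f = {m | g m = 0}) := by
  classical
  obtain ⟨σ₂, hσ₂'⟩ := Module.projective_def'.mp hP₂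
  have hσ₂ : ∀ p : P₂, ((σ₂ p).sum fun q a => a • q) = p := fun p => by
    have := LinearMap.congr_fun hσ₂' p
    simpa [Finsupp.linearCombination_apply] using this
  -- decomposition of the action of a general element of the triangular ring
  have hsmK : ∀ (a : TriRing A₁ A₂ W) (x : WTensor A₂ W P₂),
      a • x = tau A₁ A₂ W P₂ a.fst.1 x := fun a x => by
    rw [tri_smul_decomp, kinl, kinr, add_zero]
  have hsmP : ∀ (a : TriRing A₁ A₂ W) (p : P₁), a • p = a.fst.1 • p := fun a p => by
    rw [tri_smul_decomp, pinl, pinr, add_zero]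
  have hsmKP : ∀ (a : TriRing A₁ A₂ W) (m : (WTensor A₂ W P₂) × P₂),
      a • m = (tau A₁ A₂ W P₂ a.fst.1 m.1 + wmk A₂ W P₂ a.snd m.2, a.fst.2 • m.2) :=
    fun a m => by
      rw [tri_smul_decomp,
        show (TrivSqZeroExt.inl a.fst : TriRing A₁ A₂ W) • m
          = (tau A₁ A₂ W P₂ a.fst.1 m.1, a.fst.2 • m.2) from minl a.fst.1 a.fst.2 m.1 m.2,
        show (TrivSqZeroExt.inr a.snd : TriRing A₁ A₂ W) • m
          = (wmk A₂ W P₂ a.snd m.2, 0) from minr a.snd m.1 m.2,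
        Prod.mk_add_mk, add_zero]
  have hsmM : ∀ (a : TriRing A₁ A₂ W) (m : P₁ × P₂),
      a • m = (a.fst.1 • m.1 + φ (wmk A₂ W P₂ a.snd m.2), a.fst.2 • m.2) := fun a m => by
    rw [tri_smul_decomp,
      show (TrivSqZeroExt.inl a.fst : TriRing A₁ A₂ W) • m
        = (a.fst.1 • m.1, a.fst.2 • m.2) from hinl a.fst.1 a.fst.2 m.1 m.2,
      show (TrivSqZeroExt.inr a.snd : TriRing A₁ A₂ W) • m
        = (φ (wmk A₂ W P₂ a.snd m.2), 0) from hinr a.snd m.1 m.2,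
      Prod.mk_add_mk, add_zero]
  -- projectivity of `(W ⊗ P₂, 0, 0)`
  have hprojK : Module.Projective (TriRing A₁ A₂ W) (WTensor A₂ W P₂) := by
    letI := kModule A₁ A₂ W P₂
    refine proj_of_proj_left A₁ A₂ W (WTensor A₂ W P₂)
      (fun a₁ a₂ x => ?_) (fun w x => kinr w x) (kProjective A₁ A₂ W P₂ hP₂ hWproj)
    rw [kinl]; rfl
  -- projectivity of `(P₁, 0, 0)`
  have hprojP₁ : Module.Projective (TriRing A₁ A₂ W) P₁ :=
    proj_of_proj_left A₁ A₂ W P₁ pinl pinr hP₁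
  -- projectivity of `(W ⊗ P₂, id, P₂)`
  have hprojKP : Module.Projective (TriRing A₁ A₂ W) ((WTensor A₂ W P₂) × P₂) := by
    let I : (WTensor A₂ W P₂) × P₂ → (P₂ →₀ TriRing A₁ A₂ W) := fun m =>
      (alphaL A₂ W P₂ σ₂ m.1).mapRange
          (fun v => (TrivSqZeroExt.inr v : TriRing A₁ A₂ W)) (TrivSqZeroExt.inr_zero _)
        + (σ₂ m.2).mapRange (fun b => (TrivSqZeroExt.inl (0, b) : TriRing A₁ A₂ W))
          (TrivSqZeroExt.inl_zero _)
    have Ival : ∀ m q, I m q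
        = TrivSqZeroExt.inr (alphaL A₂ W P₂ σ₂ m.1 q)
          + TrivSqZeroExt.inl (0, σ₂ m.2 q) := fun m q => by
      simp [I, Finsupp.mapRange_apply, Finsupp.add_apply]
    have Iadd : ∀ m m', I (m + m') = I m + I m' := fun m m' => by
      refine Finsupp.ext fun q => ?_
      rw [Ival, Finsupp.add_apply, Ival, Ival,
        show (m + m').1 = m.1 + m'.1 from rfl, show (m + m').2 = m.2 + m'.2 from rfl,
        map_add, map_add, Finsupp.add_apply, Finsupp.add_apply,
        TrivSqZeroExt.inr_add, inl2_add A₁ A₂ W]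
      abel
    have Ismul : ∀ (a : TriRing A₁ A₂ W) m, I (a • m) = a • I m := fun a m => by
      refine Finsupp.ext fun q => ?_
      rw [Finsupp.smul_apply, Ival, Ival, smul_eq_mul, hsmKP a m]
      show TrivSqZeroExt.inr
            ((alphaL A₂ W P₂ σ₂ (tau A₁ A₂ W P₂ a.fst.1 m.1 + wmk A₂ W P₂ a.snd m.2)) q)
          + TrivSqZeroExt.inl (0, (σ₂ (a.fst.2 • m.2)) q) = _
      rw [map_add, alphaL_tau, map_smul, Finsupp.add_apply, Finsupp.smul_apply,
        Finsupp.smul_apply, alphaL_apply_wmk, smul_eq_mul, TrivSqZeroExt.inr_add,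
        mul_add, tri_mul_inr, tri_mul_inl2]
      abel
    let iL : ((WTensor A₂ W P₂) × P₂) →ₗ[TriRing A₁ A₂ W] (P₂ →₀ TriRing A₁ A₂ W) :=
      ⟨⟨I, Iadd⟩, Ismul⟩
    let π : (P₂ →₀ TriRing A₁ A₂ W) →ₗ[TriRing A₁ A₂ W] ((WTensor A₂ W P₂) × P₂) :=
      Finsupp.linearCombination (TriRing A₁ A₂ W) (fun q => ((0 : WTensor A₂ W P₂), q))
    have H : π.comp iL = LinearMap.id := by
      refine LinearMap.ext fun m => ?_
      show π (I m) = m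
      have hπ : ∀ (f : P₂ →₀ TriRing A₁ A₂ W),
          π f = f.sum fun q a => a • ((0 : WTensor A₂ W P₂), q) := fun f =>
        Finsupp.linearCombination_apply _ _
      rw [show I m = (alphaL A₂ W P₂ σ₂ m.1).mapRange
            (fun v => (TrivSqZeroExt.inr v : TriRing A₁ A₂ W)) (TrivSqZeroExt.inr_zero _)
          + (σ₂ m.2).mapRange (fun b => (TrivSqZeroExt.inl (0, b) : TriRing A₁ A₂ W))
            (TrivSqZeroExt.inl_zero _) from rfl,
        map_add, hπ, hπ]
      have hs1 : ((Finsupp.mapRange (fun v => (TrivSqZeroExt.inr v : TriRing A₁ A₂ W))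
            (TrivSqZeroExt.inr_zero _) (alphaL A₂ W P₂ σ₂ m.1)).sum
              fun q a => a • ((0 : WTensor A₂ W P₂), q))
          = (alphaL A₂ W P₂ σ₂ m.1).sum fun q v =>
              (TrivSqZeroExt.inr v : TriRing A₁ A₂ W) • ((0 : WTensor A₂ W P₂), q) :=
        Finsupp.sum_mapRange_index (fun q => zero_smul _ _)
      have hs2 : ((Finsupp.mapRange (fun b => (TrivSqZeroExt.inl (0, b) : TriRing A₁ A₂ W))
            (TrivSqZeroExt.inl_zero _) (σ₂ m.2)).sum fun q a => a • ((0 : WTensor A₂ W P₂), q))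
          = (σ₂ m.2).sum fun q b =>
              (TrivSqZeroExt.inl ((0 : A₁), b) : TriRing A₁ A₂ W) • ((0 : WTensor A₂ W P₂), q) :=
        Finsupp.sum_mapRange_index (fun q => zero_smul _ _)
      rw [hs1, hs2]
      have e1 : ((alphaL A₂ W P₂ σ₂ m.1).sum fun q v =>
            (TrivSqZeroExt.inr v : TriRing A₁ A₂ W) • ((0 : WTensor A₂ W P₂), q))
          = (m.1, (0 : P₂)) := by
        rw [show ((alphaL A₂ W P₂ σ₂ m.1).sum fun q v =>
              (TrivSqZeroExt.inr v : TriRing A₁ A₂ W) • ((0 : WTensor A₂ W P₂), q))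
            = (alphaL A₂ W P₂ σ₂ m.1).sum fun q v => ((wmk A₂ W P₂ v q, (0 : P₂)))
          from Finsupp.sum_congr fun q _ => minr _ _ _,
          sum_pair, Finsupp.sum_fun_zero, ← betaHom_apply, beta_alpha A₂ W P₂ σ₂ hσ₂ m.1]
      have e2 : ((σ₂ m.2).sum fun q b =>
            (TrivSqZeroExt.inl ((0 : A₁), b) : TriRing A₁ A₂ W) • ((0 : WTensor A₂ W P₂), q))
          = ((0 : WTensor A₂ W P₂), m.2) := by
        rw [show ((σ₂ m.2).sum fun q b =>
              (TrivSqZeroExt.inl ((0 : A₁), b) : TriRing A₁ A₂ W) • ((0 : WTensor A₂ W P₂), q))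
            = (σ₂ m.2).sum fun q b => (((0 : WTensor A₂ W P₂), b • q))
          from Finsupp.sum_congr fun q _ => by rw [minl, map_zero],
          sum_pair, Finsupp.sum_fun_zero, hσ₂]
      rw [e1, e2, Prod.mk_add_mk, add_zero, zero_add]
    haveI : Module.Projective (TriRing A₁ A₂ W) (P₂ →₀ TriRing A₁ A₂ W) := inferInstance
    exact Module.Projective.of_split iL π H
  refine ⟨hprojK, ?_, ?_⟩
  · haveI := hprojP₁
    haveI := hprojKP
    infer_instance
  intro f g
  refine ⟨?_, ?_, ?_, ?_, ?_, ?_, ?_⟩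
  · -- additivity of f
    intro x y
    show (-(φ (x + y)), (x + y, (0 : P₂)))
        = (-(φ x), (x, (0 : P₂))) + (-(φ y), (y, (0 : P₂)))
    rw [Prod.mk_add_mk, Prod.mk_add_mk, map_add, neg_add, add_zero]
  · -- linearity of f
    intro a x
    show (-(φ (a • x)), (a • x, (0 : P₂)))
        = (a • (-(φ x)), a • ((x, (0 : P₂)) : (WTensor A₂ W P₂) × P₂))
    rw [hsmK a x, hφ, hsmP, hsmKP, smul_neg]
    simp [wmk_zero_right]
  · -- additivity of g
    intro x y
    show ((x + y).1 + φ (x + y).2.1, (x + y).2.2)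
        = (x.1 + φ x.2.1, x.2.2) + (y.1 + φ y.2.1, y.2.2)
    refine Prod.ext ?_ rfl
    show (x.1 + y.1) + φ (x.2.1 + y.2.1) = ((x.1 + φ x.2.1, x.2.2) + (y.1 + φ y.2.1, y.2.2)).1
    rw [map_add]
    show _ = (x.1 + φ x.2.1) + (y.1 + φ y.2.1)
    abel
  · -- linearity of g
    intro a m
    show ((a • m.1 : P₁) + φ ((a • m.2 : (WTensor A₂ W P₂) × P₂)).1,
        ((a • m.2 : (WTensor A₂ W P₂) × P₂)).2) = a • (m.1 + φ m.2.1, m.2.2)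
    rw [hsmP, hsmKP, hsmM]
    show (a.fst.1 • m.1 + φ (tau A₁ A₂ W P₂ a.fst.1 m.2.1 + wmk A₂ W P₂ a.snd m.2.2),
        a.fst.2 • m.2.2)
      = (a.fst.1 • (m.1 + φ m.2.1) + φ (wmk A₂ W P₂ a.snd m.2.2), a.fst.2 • m.2.2)
    rw [map_add, hφ, smul_add]
    refine Prod.ext ?_ rfl
    show a.fst.1 • m.1 + (a.fst.1 • φ m.2.1 + φ (wmk A₂ W P₂ a.snd m.2.2))
        = a.fst.1 • m.1 + a.fst.1 • φ m.2.1 + φ (wmk A₂ W P₂ a.snd m.2.2)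
    abel
  · -- injectivity of f
    intro x y h
    exact congrArg (fun m => m.2.1) h
  · -- surjectivity of g
    intro m
    refine ⟨(m.1, (0, m.2)), ?_⟩
    show (m.1 + φ 0, m.2) = m
    rw [map_zero, add_zero]
  · -- exactness in the middle
    refine Set.ext fun m => ⟨?_, ?_⟩
    · rintro ⟨x, rfl⟩
      show (-(φ x) + φ x, (0 : P₂)) = 0
      rw [neg_add_cancel]
      rfl
    · intro hm
      have hm' : (m.1 + φ m.2.1, m.2.2) = 0 := hm
      have h1 : m.1 + φ m.2.1 = 0 := congrArg Prod.fst hm'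
      have h2 : m.2.2 = (0 : P₂) := congrArg Prod.snd hm'
      refine ⟨m.2.1, ?_⟩
      show (-(φ m.2.1), (m.2.1, (0 : P₂))) = m
      refine Prod.ext (neg_eq_of_add_eq_zero_left h1) (Prod.ext rfl h2.symm)
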